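/- Let (X, ‖·‖, ≼) be a normal partially ordered Banach space and D a nonempty closed inductive subset of X. Let F : D → D be an ≼-increasing compact mapping and suppose there is a point x₀ ∈ D with x₀ ≼ F x₀. Then the fixed point set 𝔉(F) = {x ∈ D : F x = x} is a nonempty chain-complete subset of D, and F has an ≼-maximal fixed point. (Corollary 3.8 (a), (a')) -/

import Mathlib

/-- The partial order on a Banach space induced by a cone `K`: `x ≼ y` iff `y - x ∈ K`. -/
def coneLe {X : Type*} [NormedAddCommGroup X] (K : Set X) (x y : X) : Prop := y - x ∈ K

section Aux

variable {X : Type*} [NormedAddCommGroup X]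

lemma coneLe_refl (K : Set X) (hK0 : (0 : X) ∈ K) (x : X) : coneLe K x x := by
  simpa [coneLe] using hK0

lemma coneLe_trans (K : Set X) (hKadd : ∀ x ∈ K, ∀ y ∈ K, x + y ∈ K)
    {a b c : X} (h1 : coneLe K a b) (h2 : coneLe K b c) : coneLe K a c := by
  have := hKadd _ h2 _ h1
  simpa [coneLe, sub_add_sub_cancel] using this

lemma isClosed_coneLe_left (K : Set X) (hKclosed : IsClosed K) (c : X) :
    IsClosed {x : X | coneLe K c x} :=
  hKclosed.preimage (continuous_id.sub continuous_const)

lemma isClosed_coneLe_right (K : Set X) (hKclosed : IsClosed K) (b : X) :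
    IsClosed {x : X | coneLe K x b} :=
  hKclosed.preimage (continuous_const.sub continuous_id)

/-- A nonempty chain with compact closure has a least upper bound in its closure. -/
lemma chain_sup (K : Set X) (hKclosed : IsClosed K) (hK0 : (0 : X) ∈ K)
    (hKadd : ∀ x ∈ K, ∀ y ∈ K, x + y ∈ K)
    (C : Set X) (hCne : C.Nonempty) (hchain : IsChain (coneLe K) C)
    (hcomp : IsCompact (closure C)) :
    ∃ s ∈ closure C, (∀ c ∈ C, coneLe K c s) ∧
      ∀ b, (∀ c ∈ C, coneLe K c b) → coneLe K s b := by
  haveI : Nonempty C := hCne.to_subtype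
  set T : C → Set X := fun c => {x ∈ C | coneLe K (c : X) x} with hT
  have hTmem : ∀ c : C, (c : X) ∈ T c := fun c => ⟨c.2, coneLe_refl K hK0 _⟩
  have hdir : Directed (· ≥ ·) fun c : C => Filter.principal (T c) := by
    intro c₁ c₂
    rcases eq_or_ne (c₁ : X) (c₂ : X) with h | h
    · refine ⟨c₁, le_refl _, ?_⟩
      simp only [ge_iff_le, Filter.principal_mono, hT]
      intro x hx
      exact ⟨hx.1, h ▸ hx.2⟩
    · rcases hchain c₁.2 c₂.2 h with h12 | h21
      · refine ⟨c₂, ?_, le_refl _⟩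
        simp only [ge_iff_le, Filter.principal_mono, hT]
        exact fun x hx => ⟨hx.1, coneLe_trans K hKadd h12 hx.2⟩
      · refine ⟨c₁, le_refl _, ?_⟩
        simp only [ge_iff_le, Filter.principal_mono, hT]
        exact fun x hx => ⟨hx.1, coneLe_trans K hKadd h21 hx.2⟩
  set 𝓕 : Filter X := ⨅ c : C, Filter.principal (T c) with h𝓕
  haveI hne : 𝓕.NeBot :=
    Filter.iInf_neBot_of_directed' hdir fun c =>
      Filter.principal_neBot_iff.2 ⟨c, hTmem c⟩
  have hle : 𝓕 ≤ Filter.principal (closure C) := by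
    refine le_trans (iInf_le _ (Classical.arbitrary C)) ?_
    rw [Filter.principal_mono]
    exact fun x hx => subset_closure hx.1
  obtain ⟨s, hs, hcl⟩ := hcomp.exists_clusterPt hle
  refine ⟨s, hs, ?_, ?_⟩
  · intro c hc
    have h1 : ClusterPt s (Filter.principal (T ⟨c, hc⟩)) :=
      hcl.mono (iInf_le _ (⟨c, hc⟩ : C))
    have h2 : s ∈ closure (T ⟨c, hc⟩) := mem_closure_iff_clusterPt.2 h1
    have h3 : closure (T ⟨c, hc⟩) ⊆ {x : X | coneLe K c x} :=
      closure_minimal (fun x hx => hx.2) (isClosed_coneLe_left K hKclosed c)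
    exact h3 h2
  · intro b hb
    have h3 : closure C ⊆ {x : X | coneLe K x b} :=
      closure_minimal hb (isClosed_coneLe_right K hKclosed b)
    exact h3 hs

/-- Monotone convergence: an increasing sequence whose shifted terms lie in a compact set,
with a normal cone, converges. -/
lemma mono_seq_tendsto (K : Set X) (hKclosed : IsClosed K)
    (hnormal : ∃ l : ℝ, 0 < l ∧ ∀ x y : X, x ∈ K → y - x ∈ K → ‖x‖ ≤ l * ‖y‖)
    (u : ℕ → X) (hmono : ∀ m n, m ≤ n → coneLe K (u m) (u n))
    (S : Set X) (hS : IsCompact S) (hu : ∀ n, u (n + 1) ∈ S) :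
    ∃ s, Filter.Tendsto u Filter.atTop (nhds s) := by
  obtain ⟨l, hl, hln⟩ := hnormal
  obtain ⟨s, _, φ, hφ, hsub⟩ := hS.tendsto_subseq (x := fun n => u (n + 1)) hu
  -- every term is below s
  have hub : ∀ m, coneLe K (u m) s := by
    intro m
    have : Filter.Tendsto (fun k => u (φ k + 1) - u m) Filter.atTop (nhds (s - u m)) :=
      hsub.sub_const _
    refine hKclosed.mem_of_tendsto this ?_
    filter_upwards [Filter.eventually_ge_atTop m] with k hk
    exact hmono m (φ k + 1) (le_trans (le_trans hk (hφ.le_apply)) (Nat.le_succ _))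
  refine ⟨s, ?_⟩
  rw [NormedAddCommGroup.tendsto_atTop]
  intro ε hε
  have hε' : 0 < ε / (l + 1) := div_pos hε (by linarith)
  obtain ⟨k, hk⟩ := (NormedAddCommGroup.tendsto_atTop.1 hsub) (ε / (l + 1)) hε'
  refine ⟨φ k + 1, fun n hn => ?_⟩
  have h1 : coneLe K (u (φ k + 1)) (u n) := hmono _ _ hn
  have h2 : (s - u (φ k + 1)) - (u n - u (φ k + 1)) ∈ K := by
    simpa [coneLe, sub_sub_sub_cancel_right] using hub n
  have h3 : ‖u n - u (φ k + 1)‖ ≤ l * ‖s - u (φ k + 1)‖ := hln _ _ h1 h2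
  have h4 : ‖u (φ k + 1) - s‖ < ε / (l + 1) := hk k le_rfl
  have h5 : ‖u n - s‖ ≤ ‖u n - u (φ k + 1)‖ + ‖u (φ k + 1) - s‖ := norm_sub_le_norm_sub_add_norm_sub _ _ _
  have h6 : ‖s - u (φ k + 1)‖ = ‖u (φ k + 1) - s‖ := norm_sub_rev _ _
  calc ‖u n - s‖ ≤ l * ‖u (φ k + 1) - s‖ + ‖u (φ k + 1) - s‖ := by
        rw [← h6]; linarith [h6 ▸ h3]
    _ = (l + 1) * ‖u (φ k + 1) - s‖ := by ring
    _ < (l + 1) * (ε / (l + 1)) := by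
        apply mul_lt_mul_of_pos_left h4 (by linarith)
    _ = ε := by field_simp

end Aux

/-- Corollary 3.8 (a), (a'): in a normal partially ordered Banach space, for an
≼-increasing compact mapping `F : D → D` on a nonempty closed inductive set `D`, with a
point `x₀ ∈ D` such that `x₀ ≼ F x₀`, the fixed point set `𝔉(F)` is a nonempty
chain-complete subset of `D`, and `F` has a maximal fixed point. -/
theorem singlevalued_fixed_points_chainComplete_of_normal
    {X : Type*} [NormedAddCommGroup X] [NormedSpace ℝ X] [CompleteSpace X]
    (K : Set X) (hKclosed : IsClosed K) (hK0 : (0 : X) ∈ K)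
    (hKadd : ∀ x ∈ K, ∀ y ∈ K, x + y ∈ K)
    (hKsmul : ∀ c : ℝ, 0 ≤ c → ∀ x ∈ K, c • x ∈ K)
    (hKpointed : ∀ x ∈ K, -x ∈ K → x = 0)
    -- normality of the order
    (hnormal : ∃ l : ℝ, 0 < l ∧ ∀ x y : X, x ∈ K → y - x ∈ K → ‖x‖ ≤ l * ‖y‖)
    -- D is a nonempty closed inductive subset of X
    (D : Set X) (hDne : D.Nonempty) (hDclosed : IsClosed D)
    (hDind : ∀ C ⊆ D, C.Nonempty → IsChain (coneLe K) C → ∃ b ∈ D, ∀ c ∈ C, coneLe K c b)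
    -- F maps D into D and is ≼-increasing
    (F : X → X) (hFmaps : ∀ x ∈ D, F x ∈ D)
    (hFinc : ∀ x ∈ D, ∀ y ∈ D, coneLe K x y → coneLe K (F x) (F y))
    -- F is compact: continuous and maps bounded sets to relatively compact sets
    (hFcont : ContinuousOn F D)
    (hFcomp : ∀ C ⊆ D, Bornology.IsBounded C → IsCompact (closure (F '' C)))
    -- starting point
    (x₀ : X) (hx₀ : x₀ ∈ D) (h₀ : coneLe K x₀ (F x₀)) :
    ({x | x ∈ D ∧ F x = x}).Nonempty ∧
    (∀ C ⊆ {x | x ∈ D ∧ F x = x}, C.Nonempty → IsChain (coneLe K) C →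
      (∃ b, ∀ c ∈ C, coneLe K c b) →
      ∃ s, s ∈ {x | x ∈ D ∧ F x = x} ∧ (∀ c ∈ C, coneLe K c s) ∧
        ∀ b, (∀ c ∈ C, coneLe K c b) → coneLe K s b) ∧
    (∃ m, m ∈ {x | x ∈ D ∧ F x = x} ∧
      ∀ y ∈ {x | x ∈ D ∧ F x = x}, coneLe K m y → m = y) := by
  obtain ⟨l, hl, hln⟩ := hnormal
  set P : Set X := {x | x ∈ D ∧ F x = x} with hP
  -- Part 1: P is nonempty
  have part1 : P.Nonempty := by
    set u : ℕ → X := fun n => F^[n] x₀ with hu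
    have huD : ∀ n, u n ∈ D := by
      intro n
      induction n with
      | zero => exact hx₀
      | succ n ih =>
        show F^[n + 1] x₀ ∈ D
        rw [Function.iterate_succ_apply']
        exact hFmaps _ ih
    have husucc : ∀ n, u (n + 1) = F (u n) := fun n => Function.iterate_succ_apply' F n x₀
    have hstep : ∀ n, coneLe K (u n) (u (n + 1)) := by
      intro n
      induction n with
      | zero => simpa [hu] using h₀
      | succ n ih =>
        have := hFinc _ (huD n) _ (huD (n + 1)) ih
        rw [← husucc n, ← husucc (n + 1)] at this
        exact this
    have hmono : ∀ m n, m ≤ n → coneLe K (u m) (u n) := by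
      intro m n hmn
      induction n, hmn using Nat.le_induction with
      | base => exact coneLe_refl K hK0 _
      | succ n hmn ih => exact coneLe_trans K hKadd ih (hstep n)
    have hchain : IsChain (coneLe K) (Set.range u) := by
      rintro _ ⟨m, rfl⟩ _ ⟨n, rfl⟩ _
      rcases le_total m n with h | h
      · exact Or.inl (hmono m n h)
      · exact Or.inr (hmono n m h)
    obtain ⟨b, hbD, hb⟩ := hDind (Set.range u) (Set.range_subset_iff.2 huD)
      ⟨u 0, 0, rfl⟩ hchain
    have hbound : Bornology.IsBounded (Set.range u) := by
      rw [isBounded_iff_forall_norm_le]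
      refine ⟨‖u 0‖ + l * ‖b - u 0‖, ?_⟩
      rintro _ ⟨n, rfl⟩
      have h1 : u n - u 0 ∈ K := hmono 0 n (Nat.zero_le n)
      have h2 : (b - u 0) - (u n - u 0) ∈ K := by
        simpa [coneLe, sub_sub_sub_cancel_right] using hb (u n) ⟨n, rfl⟩
      have h3 : ‖u n - u 0‖ ≤ l * ‖b - u 0‖ := hln _ _ h1 h2
      have heq : u 0 + (u n - u 0) = u n := by abel
      calc ‖u n‖ = ‖u 0 + (u n - u 0)‖ := by rw [heq]
        _ ≤ ‖u 0‖ + ‖u n - u 0‖ := norm_add_le _ _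
        _ ≤ ‖u 0‖ + l * ‖b - u 0‖ := by linarith
    have hScomp : IsCompact (closure (F '' Set.range u)) :=
      hFcomp _ (Set.range_subset_iff.2 huD) hbound
    have huS : ∀ n, u (n + 1) ∈ closure (F '' Set.range u) := by
      intro n
      apply subset_closure
      exact ⟨u n, ⟨n, rfl⟩, (husucc n).symm⟩
    obtain ⟨s, hs⟩ := mono_seq_tendsto K hKclosed ⟨l, hl, hln⟩ u hmono _ hScomp huS
    have hsD : s ∈ D := hDclosed.mem_of_tendsto hs (Filter.Eventually.of_forall huD)
    have hFs : Filter.Tendsto (fun n => F (u n)) Filter.atTop (nhds (F s)) := by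
      have h1 : Filter.Tendsto u Filter.atTop (nhdsWithin s D) :=
        tendsto_nhdsWithin_iff.2 ⟨hs, Filter.Eventually.of_forall huD⟩
      exact ((hFcont s hsD).tendsto).comp h1
    have hFs' : Filter.Tendsto (fun n => F (u n)) Filter.atTop (nhds s) := by
      have : (fun n => F (u n)) = fun n => u (n + 1) := by
        funext n; exact (husucc n).symm
      rw [this]
      exact hs.comp (Filter.tendsto_add_atTop_nat 1)
    exact ⟨s, hsD, tendsto_nhds_unique hFs hFs'⟩
  -- Part 2: chain completeness
  have part2 : ∀ C ⊆ P, C.Nonempty → IsChain (coneLe K) C →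
      (∃ b, ∀ c ∈ C, coneLe K c b) →
      ∃ s, s ∈ P ∧ (∀ c ∈ C, coneLe K c s) ∧
        ∀ b, (∀ c ∈ C, coneLe K c b) → coneLe K s b := by
    intro C hCP hCne hchain ⟨b, hb⟩
    obtain ⟨c₀, hc₀⟩ := hCne
    set C' : Set X := {c ∈ C | coneLe K c₀ c} with hC'
    have hc₀C' : c₀ ∈ C' := ⟨hc₀, coneLe_refl K hK0 _⟩
    have hC'sub : C' ⊆ C := fun x hx => hx.1
    have hC'D : C' ⊆ D := fun x hx => (hCP (hC'sub hx)).1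
    have hC'chain : IsChain (coneLe K) C' := hchain.mono hC'sub
    have hC'bd : Bornology.IsBounded C' := by
      rw [isBounded_iff_forall_norm_le]
      refine ⟨‖c₀‖ + l * ‖b - c₀‖, ?_⟩
      intro c hc
      have h1 : c - c₀ ∈ K := hc.2
      have h2 : (b - c₀) - (c - c₀) ∈ K := by
        simpa [coneLe, sub_sub_sub_cancel_right] using hb c (hC'sub hc)
      have h3 : ‖c - c₀‖ ≤ l * ‖b - c₀‖ := hln _ _ h1 h2
      have heq : c₀ + (c - c₀) = c := by abel
      calc ‖c‖ = ‖c₀ + (c - c₀)‖ := by rw [heq]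
        _ ≤ ‖c₀‖ + ‖c - c₀‖ := norm_add_le _ _
        _ ≤ ‖c₀‖ + l * ‖b - c₀‖ := by linarith
    have hFC' : IsCompact (closure (F '' C')) := hFcomp _ hC'D hC'bd
    have hsubF : C' ⊆ closure (F '' C') := by
      intro c hc
      apply subset_closure
      exact ⟨c, hc, (hCP (hC'sub hc)).2⟩
    have hclC' : IsCompact (closure C') :=
      hFC'.of_isClosed_subset isClosed_closure (closure_minimal hsubF isClosed_closure)
    obtain ⟨s, hscl, hsub, hslub⟩ :=
      chain_sup K hKclosed hK0 hKadd C' ⟨c₀, hc₀C'⟩ hC'chain hclC'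
    have hsD : s ∈ D := closure_minimal hC'D hDclosed hscl
    -- s is a fixed point
    have hFss : F s = s := by
      obtain ⟨v, hv, hvs⟩ := mem_closure_iff_seq_limit.1 hscl
      have h1 : Filter.Tendsto (fun n => F (v n)) Filter.atTop (nhds (F s)) :=
        ((hFcont s hsD).tendsto).comp
          (tendsto_nhdsWithin_iff.2 ⟨hvs, Filter.Eventually.of_forall fun n => hC'D (hv n)⟩)
      have h2 : (fun n => F (v n)) = v := by
        funext n; exact (hCP (hC'sub (hv n))).2
      rw [h2] at h1
      exact tendsto_nhds_unique h1 hvs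
    refine ⟨s, ⟨hsD, hFss⟩, ?_, ?_⟩
    · intro c hc
      by_cases h : coneLe K c₀ c
      · exact hsub c ⟨hc, h⟩
      · rcases eq_or_ne c c₀ with rfl | hne
        · exact hsub c hc₀C'
        · rcases hchain hc hc₀ hne with h1 | h1
          · exact coneLe_trans K hKadd h1 (hsub c₀ hc₀C')
          · exact absurd h1 h
    · intro b' hb'
      exact hslub b' fun c hc => hb' c (hC'sub hc)
  -- Part 3: maximal fixed point via Zorn
  have part3 : ∃ m, m ∈ P ∧ ∀ y ∈ P, coneLe K m y → m = y := by
    obtain ⟨p, hp⟩ := part1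
    have hzorn : ∃ m : P, ∀ a : P, coneLe K (m : X) (a : X) → coneLe K (a : X) (m : X) := by
      apply exists_maximal_of_chains_bounded
        (r := fun a b : P => coneLe K (a : X) (b : X))
      · intro c hc
        rcases c.eq_empty_or_nonempty with rfl | hcne
        · exact ⟨⟨p, hp⟩, fun a ha => absurd ha (Set.notMem_empty a)⟩
        · set C : Set X := (fun a : P => (a : X)) '' c with hC
          have hCP : C ⊆ P := by rintro _ ⟨a, _, rfl⟩; exact a.2
          have hCne : C.Nonempty := hcne.image _
          have hCchain : IsChain (coneLe K) C := by
            rintro _ ⟨a, ha, rfl⟩ _ ⟨b', hb', rfl⟩ hne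
            have hab : a ≠ b' := fun h => hne (by rw [h])
            exact hc ha hb' hab
          obtain ⟨b, _, hbub⟩ := hDind C (fun x hx => (hCP hx).1) hCne hCchain
          obtain ⟨s, hsP, hsub, _⟩ := part2 C hCP hCne hCchain ⟨b, hbub⟩
          exact ⟨⟨s, hsP⟩, fun a ha => hsub (a : X) ⟨a, ha, rfl⟩⟩
      · intro a b c hab hbc
        exact coneLe_trans K hKadd hab hbc
    obtain ⟨m, hm⟩ := hzorn
    refine ⟨(m : X), m.2, ?_⟩
    intro y hy hmy
    have h1 : coneLe K y (m : X) := hm ⟨y, hy⟩ hmy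
    have h2 : y - (m : X) = 0 := hKpointed _ hmy (by simpa [coneLe, neg_sub] using h1)
    exact (sub_eq_zero.1 h2).symm
  exact ⟨part1, part2, part3⟩
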